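/- Let α > 0, ỹ ∈ X, x* ∈ X, and g ∈ ℝ^n with ‖g‖ ≤ G. Let x⁺ be a minimizer over X of x ↦ α⟨g, x⟩ + V_φ(x, ỹ) (i.e., x⁺ ∈ X and α⟨g, x⁺⟩ + V_φ(x⁺, ỹ) ≤ α⟨g, x⟩ + V_φ(x, ỹ) for all x ∈ X). Then ⟨g, ỹ − x*⟩ ≤ (1/α)·(V_φ(x*, ỹ) − V_φ(x*, x⁺)) + G²α/(2σ_φ). -/

import Mathlib

open scoped RealInnerProductSpace BigOperators

open Filter Set Topology

/-- Lemma 8: the basic mirror-descent inequality for one step of Algorithm 1. -/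
theorem mirror_descent_step_inequality
    {n : ℕ} (X : Set (EuclideanSpace ℝ (Fin n)))
    (hXne : X.Nonempty) (hXcompact : IsCompact X) (hXconvex : Convex ℝ X)
    (φ : EuclideanSpace ℝ (Fin n) → ℝ)
    (gradφ : EuclideanSpace ℝ (Fin n) → EuclideanSpace ℝ (Fin n))
    (hφC1 : ContDiff ℝ 1 φ)
    (hgrad : ∀ x, HasGradientAt φ (gradφ x) x)
    (σ : ℝ) (hσ : 0 < σ)
    (hstrong : ∀ a b, φ b ≥ φ a + ⟪gradφ a, b - a⟫ + σ / 2 * ‖b - a‖ ^ 2)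
    (V : EuclideanSpace ℝ (Fin n) → EuclideanSpace ℝ (Fin n) → ℝ)
    (hV : ∀ a b, V a b = φ a - φ b - ⟪gradφ b, a - b⟫)
    (G : ℝ) (hG : 0 < G)
    (α : ℝ) (hα : 0 < α)
    (ytilde xstar : EuclideanSpace ℝ (Fin n)) (hyt : ytilde ∈ X) (hxstar : xstar ∈ X)
    (g : EuclideanSpace ℝ (Fin n)) (hg : ‖g‖ ≤ G)
    (xplus : EuclideanSpace ℝ (Fin n)) (hxp : xplus ∈ X)
    (hmin : ∀ x ∈ X, α * ⟪g, xplus⟫ + V xplus ytilde ≤ α * ⟪g, x⟫ + V x ytilde) :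
    ⟪g, ytilde - xstar⟫ ≤
      1 / α * (V xstar ytilde - V xstar xplus) + G ^ 2 * α / (2 * σ) := by
  set c : EuclideanSpace ℝ (Fin n) := xstar - xplus with hc
  -- the curve t ↦ xplus + t • c
  have hγ : HasDerivAt (fun t : ℝ => xplus + t • c) c 0 := by
    simpa using ((hasDerivAt_id (0:ℝ)).smul_const c).const_add xplus
  -- derivative of ψ t = φ (xplus + t • c) at 0
  have hψ : HasDerivAt (fun t : ℝ => φ (xplus + t • c)) ⟪gradφ xplus, c⟫ 0 := by
    have h1 := (hgrad xplus).hasFDerivAt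
    have h2 : HasFDerivAt φ (InnerProductSpace.toDual ℝ _ (gradφ xplus))
        (xplus + (0:ℝ) • c) := by simpa using h1
    have := h2.comp_hasDerivAt 0 hγ
    simpa [InnerProductSpace.toDual_apply_apply, Function.comp_def] using this
  -- variational inequality
  have hVI : 0 ≤ α * ⟪g, c⟫ + ⟪gradφ xplus, c⟫ - ⟪gradφ ytilde, c⟫ := by
    set L : ℝ := α * ⟪g, c⟫ - ⟪gradφ ytilde, c⟫ with hL
    have key : ∀ t ∈ Set.Ioo (0:ℝ) 1, -L ≤ (φ (xplus + t • c) - φ xplus) / t := by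
      intro t ht
      have hmem : xplus + t • c ∈ X := by
        have := hXconvex hxp hxstar (by linarith [ht.2] : (0:ℝ) ≤ 1 - t)
          ht.1.le (by ring)
        convert this using 1
        rw [hc]
        module
      have h := hmin _ hmem
      rw [hV, hV] at h
      have hin1 : ⟪g, xplus + t • c⟫ = ⟪g, xplus⟫ + t * ⟪g, c⟫ := by
        rw [inner_add_right, real_inner_smul_right]
      have hin2 : ⟪gradφ ytilde, xplus + t • c - ytilde⟫
          = ⟪gradφ ytilde, xplus - ytilde⟫ + t * ⟪gradφ ytilde, c⟫ := by
        have : xplus + t • c - ytilde = (xplus - ytilde) + t • c := by abel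
        rw [this, inner_add_right, real_inner_smul_right]
      rw [hin1, hin2] at h
      rw [le_div_iff₀ ht.1, hL]
      nlinarith [h]
    have htend : Tendsto (fun t : ℝ => (φ (xplus + t • c) - φ xplus) / t)
        (𝓝[>] (0:ℝ)) (𝓝 ⟪gradφ xplus, c⟫) := by
      have := hasDerivAt_iff_tendsto_slope.mp hψ
      have h2 : Tendsto (slope (fun t : ℝ => φ (xplus + t • c)) 0)
          (𝓝[>] (0:ℝ)) (𝓝 ⟪gradφ xplus, c⟫) :=
        this.mono_left (nhdsWithin_mono _ (fun x hx => ne_of_gt hx))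
      refine h2.congr' ?_
      filter_upwards [self_mem_nhdsWithin] with t ht
      simp [slope_def_field]
    have hIoo : Set.Ioo (0:ℝ) 1 ∈ 𝓝[>] (0:ℝ) :=
      Ioo_mem_nhdsGT_of_mem (Set.mem_Ico.mpr ⟨le_refl (0:ℝ), one_pos⟩)
    have hfinal : -L ≤ ⟪gradφ xplus, c⟫ :=
      ge_of_tendsto htend (by filter_upwards [hIoo] with t ht using key t ht)
    rw [hL] at hfinal; linarith
  -- three point identity
  have hthree : V xstar ytilde - V xstar xplus - V xplus ytilde
      = ⟪gradφ xplus, c⟫ - ⟪gradφ ytilde, c⟫ := by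
    rw [hV, hV, hV, hc]
    have e1 : xstar - ytilde = (xstar - xplus) + (xplus - ytilde) := by abel
    rw [e1, inner_add_right]
    ring
  -- strong convexity lower bound on V xplus ytilde
  have hsc : σ / 2 * ‖ytilde - xplus‖ ^ 2 ≤ V xplus ytilde := by
    have := hstrong ytilde xplus
    rw [hV]
    rw [norm_sub_rev]
    linarith
  -- Young's inequality
  have hyoung : α * ⟪g, ytilde - xplus⟫ ≤ G ^ 2 * α ^ 2 / (2 * σ)
      + σ / 2 * ‖ytilde - xplus‖ ^ 2 := by
    set D : ℝ := G ^ 2 * α ^ 2 / (2 * σ) with hD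
    have hD' : D * (2 * σ) = G ^ 2 * α ^ 2 := div_mul_cancel₀ _ (by positivity)
    have h1 : ⟪g, ytilde - xplus⟫ ≤ ‖g‖ * ‖ytilde - xplus‖ := real_inner_le_norm _ _
    have h2 : α * ⟪g, ytilde - xplus⟫ ≤ α * (G * ‖ytilde - xplus‖) := by
      have : ‖g‖ * ‖ytilde - xplus‖ ≤ G * ‖ytilde - xplus‖ :=
        mul_le_mul_of_nonneg_right hg (norm_nonneg _)
      nlinarith [hα]
    nlinarith [sq_nonneg (G * α - σ * ‖ytilde - xplus‖), hσ, h2]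
  -- combine
  have hsplit : ⟪g, ytilde - xstar⟫ * α = α * ⟪g, ytilde - xplus⟫ - α * ⟪g, c⟫ := by
    have : ytilde - xstar = (ytilde - xplus) - c := by rw [hc]; abel
    rw [this, inner_sub_right]; ring
  have hVI' : -(α * ⟪g, c⟫) ≤ V xstar ytilde - V xstar xplus - V xplus ytilde := by
    rw [hthree]; linarith
  have main : ⟪g, ytilde - xstar⟫ * α ≤
      (V xstar ytilde - V xstar xplus) + G ^ 2 * α ^ 2 / (2 * σ) := by
    linarith [hsplit, hVI', hyoung, hsc]
  have heq : 1 / α * (V xstar ytilde - V xstar xplus) + G ^ 2 * α / (2 * σ)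
      = ((V xstar ytilde - V xstar xplus) + G ^ 2 * α ^ 2 / (2 * σ)) / α := by
    field_simp
  rw [heq, le_div_iff₀ hα]
  exact main
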